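/- Fix a,b > 0 and integers n > k ≥ 1. Let P^n_k be the centered Gaussian on ℝ^k with covariance Σ_{n,k} = d_n(I_k + c_n J_k), where d_n = 1/(a + bn/(n-1)) and c_n = b/(a(n-1)), and let μ^{⊗k} be the centered Gaussian with covariance (a+b)^{-1} I_k. Then W_2²(P^n_k, μ^{⊗k}) = (k-1)(a+b)^{-1}(√(d_n(a+b)) - 1)² + (a+b)^{-1}(√(d_n(a+b)(1+k c_n)) - 1)². -/

import Mathlib

open MeasureTheory

/-- Squared quadratic Wasserstein distance on `ℝ^k` (Euclidean cost),
defined as an infimum over couplings. -/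
noncomputable def W2sq {k : ℕ} (μ ν : Measure (Fin k → ℝ)) : ℝ :=
  sInf { r : ℝ | ∃ π : Measure ((Fin k → ℝ) × (Fin k → ℝ)),
    IsProbabilityMeasure π ∧ π.map Prod.fst = μ ∧ π.map Prod.snd = ν ∧
    r = ∫ p, ∑ i, (p.1 i - p.2 i) ^ 2 ∂π }

/-- Centered Gaussian measure on `ℝ^k` with covariance matrix `S`. -/
noncomputable def gaussianCov {k : ℕ} (S : Matrix (Fin k) (Fin k) ℝ) :
    Measure (Fin k → ℝ) :=
  volume.withDensity fun x =>
    ENNReal.ofReal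
      (Real.exp (-(dotProduct x (S⁻¹.mulVec x)) / 2)
        / Real.sqrt ((2 * Real.pi) ^ k * S.det))

namespace W2Aux

open Real
open scoped ENNReal NNReal

noncomputable section



/-- 1-D standard Gaussian density. -/
def g0 (t : ℝ) : ℝ := Real.exp (-(1/2) * t ^ 2) / Real.sqrt (2 * Real.pi)

lemma g0_nonneg (t : ℝ) : 0 ≤ g0 t :=
  div_nonneg (Real.exp_nonneg _) (Real.sqrt_nonneg _)

lemma g0_continuous : Continuous g0 := by
  unfold g0; fun_prop

lemma integrable_g0 : Integrable g0 := by
  unfold g0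
  exact (integrable_exp_neg_mul_sq (by norm_num : (0:ℝ) < 1/2)).div_const _

lemma integral_g0 : ∫ t, g0 t = 1 := by
  unfold g0
  rw [integral_div, integral_gaussian]
  rw [div_eq_one_iff_eq (by positivity)]
  congr 1
  rw [div_div_eq_mul_div, div_one, mul_comm]

lemma integrable_mul_g0 : Integrable (fun t => t * g0 t) := by
  unfold g0
  have := integrable_mul_exp_neg_mul_sq (by norm_num : (0:ℝ) < 1/2)
  simpa [mul_div_assoc] using this.div_const (Real.sqrt (2 * Real.pi))

lemma integral_mul_g0 : ∫ t, t * g0 t = 0 := by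
  have h := MeasureTheory.integral_neg_eq_self (fun t => t * g0 t) (volume : Measure ℝ)
  have h2 : (∫ t, (-t) * g0 (-t)) = ∫ t, t * g0 t := h
  have h3 : (∫ t, (-t) * g0 (-t)) = - ∫ t, t * g0 t := by
    rw [← integral_neg]
    congr 1 with t
    simp [g0, neg_mul]
  linarith [h2.symm.trans h3]

lemma integrable_sq_mul_exp : Integrable (fun t : ℝ => t ^ 2 * Real.exp (-(1/2) * t ^ 2)) := by
  have := integrable_rpow_mul_exp_neg_mul_sq (by norm_num : (0:ℝ) < 1/2)
    (by norm_num : (-1:ℝ) < 2)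
  have e : ∀ t : ℝ, t ^ (2:ℝ) = t ^ (2:ℕ) := fun t => by
    rw [show ((2:ℝ)) = ((2:ℕ):ℝ) by norm_num, Real.rpow_natCast]
  simpa [e] using this

lemma integrable_sq_mul_g0 : Integrable (fun t => t ^ 2 * g0 t) := by
  unfold g0
  simpa [mul_div_assoc] using integrable_sq_mul_exp.div_const (Real.sqrt (2 * Real.pi))

lemma integral_sq_mul_exp_Ioi :
    ∫ t in Set.Ioi (0:ℝ), t ^ 2 * Real.exp (-(1/2) * t ^ 2)
      = ∫ t in Set.Ioi (0:ℝ), Real.exp (-(1/2) * t ^ 2) := by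
  -- integration by parts with F t = t * exp(-(1/2) t^2)
  have hderiv : ∀ t ∈ Set.Ioi (0:ℝ),
      HasDerivAt (fun t : ℝ => t * Real.exp (-(1/2) * t ^ 2))
        (Real.exp (-(1/2) * t ^ 2) - t ^ 2 * Real.exp (-(1/2) * t ^ 2)) t := by
    intro t _
    have h1 : HasDerivAt (fun t : ℝ => -(1/2) * t ^ 2) (-t) t := by
      have := (hasDerivAt_pow 2 t).const_mul (-(1/2) : ℝ)
      simpa using this.congr_deriv (by ring)
    have h2 := (h1.exp)
    have h3 : HasDerivAt (fun x : ℝ => x * Real.exp (-(1/2) * x ^ 2))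
        (1 * Real.exp (-(1/2) * t ^ 2) + t * (Real.exp (-(1/2) * t ^ 2) * -t)) t :=
      (hasDerivAt_id' t).mul h2
    convert h3 using 1
    ring
  have hint : IntegrableOn
      (fun t => Real.exp (-(1/2) * t ^ 2) - t ^ 2 * Real.exp (-(1/2) * t ^ 2))
      (Set.Ioi (0:ℝ)) := by
    exact ((integrable_exp_neg_mul_sq (by norm_num : (0:ℝ) < 1/2)).sub
      integrable_sq_mul_exp).integrableOn
  have htend : Filter.Tendsto (fun t : ℝ => t * Real.exp (-(1/2) * t ^ 2))
      Filter.atTop (nhds 0) := by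
    have hlo := rpow_mul_exp_neg_mul_sq_isLittleO_exp_neg
      (by norm_num : (0:ℝ) < 1/2) 1
    have hcomp : Filter.Tendsto (fun x : ℝ => (1/2) * x) Filter.atTop Filter.atTop :=
      Filter.Tendsto.const_mul_atTop (by norm_num) Filter.tendsto_id
    have htend0 : Filter.Tendsto (fun x : ℝ => Real.exp (-((1/2) * x)))
        Filter.atTop (nhds 0) := Real.tendsto_exp_neg_atTop_nhds_zero.comp hcomp
    have htend0' : Filter.Tendsto (fun x : ℝ => Real.exp (-(1/2) * x))
        Filter.atTop (nhds 0) := by simpa [neg_mul] using htend0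
    have := hlo.trans_tendsto htend0'
    refine this.congr' ?_
    filter_upwards [Filter.eventually_gt_atTop (0:ℝ)] with t ht
    rw [Real.rpow_one]
  have := MeasureTheory.integral_Ioi_of_hasDerivAt_of_tendsto
    (by fun_prop : Continuous (fun t : ℝ => t * Real.exp (-(1/2) * t ^ 2))).continuousWithinAt
    hderiv hint htend
  simp only [mul_zero, zero_mul, Real.exp_zero, mul_one, zero_sub] at this
  have := this
  have hsplit : ∫ t in Set.Ioi (0:ℝ),
      (Real.exp (-(1/2) * t ^ 2) - t ^ 2 * Real.exp (-(1/2) * t ^ 2))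
      = (∫ t in Set.Ioi (0:ℝ), Real.exp (-(1/2) * t ^ 2))
        - ∫ t in Set.Ioi (0:ℝ), t ^ 2 * Real.exp (-(1/2) * t ^ 2) := by
    exact integral_sub ((integrable_exp_neg_mul_sq (by norm_num : (0:ℝ) < 1/2)).integrableOn)
      (integrable_sq_mul_exp.integrableOn)
  rw [hsplit] at this
  linarith

lemma integral_sq_mul_g0 : ∫ t, t ^ 2 * g0 t = 1 := by
  have h2 : ∫ t : ℝ, t ^ 2 * Real.exp (-(1/2) * t ^ 2)
      = 2 * ∫ t in Set.Ioi (0:ℝ), t ^ 2 * Real.exp (-(1/2) * t ^ 2) := by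
    have := integral_comp_abs (f := fun u : ℝ => u ^ 2 * Real.exp (-(1/2) * u ^ 2))
    simpa [sq_abs] using this
  rw [integral_sq_mul_exp_Ioi] at h2
  have h3 : ∫ t in Set.Ioi (0:ℝ), Real.exp (-(1/2) * t ^ 2) = Real.sqrt (π / (1/2)) / 2 := by
    simpa using integral_gaussian_Ioi (1/2)
  have hfull : ∫ t : ℝ, t ^ 2 * Real.exp (-(1/2) * t ^ 2) = Real.sqrt (2 * π) := by
    rw [h2, h3, show π / (1/2) = 2 * π by ring]
    ring
  simp only [g0, ← mul_div_assoc]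
  rw [integral_div, hfull, div_self (by positivity)]




/-- The matrix `p • I + q • J`. -/
def Mf (k : ℕ) (p q : ℝ) : Matrix (Fin k) (Fin k) ℝ :=
  p • 1 + q • Matrix.of (fun _ _ => 1)

variable {k : ℕ}

lemma Mf_apply (p q : ℝ) (i j : Fin k) :
    Mf k p q i j = p * (if i = j then 1 else 0) + q := by
  simp [Mf, Matrix.one_apply, mul_ite]

lemma Mf_one : Mf k 1 0 = 1 := by
  ext i j; simp [Mf]

lemma Mf_transpose (p q : ℝ) : (Mf k p q).transpose = Mf k p q := by
  ext i j
  simp only [Matrix.transpose_apply, Mf_apply]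
  by_cases h : i = j <;> simp [h, eq_comm]

lemma Mf_mul (p q u v : ℝ) :
    Mf k p q * Mf k u v = Mf k (p * u) (p * v + q * u + k * (q * v)) := by
  ext i j
  simp only [Matrix.mul_apply, Mf_apply]
  have : ∀ l ∈ Finset.univ, (p * (if i = l then 1 else 0) + q) * (u * (if l = j then 1 else 0) + v)
      = (p * u) * ((if i = l then 1 else 0) * (if l = j then 1 else 0))
        + (p * v) * (if i = l then 1 else 0) + (q * u) * (if l = j then 1 else 0) + q * v := by
    intro l _; ring
  rw [Finset.sum_congr rfl this]
  rw [Finset.sum_add_distrib, Finset.sum_add_distrib, Finset.sum_add_distrib]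
  have h1 : ∑ l : Fin k, (p * u) * ((if i = l then 1 else 0) * (if l = j then 1 else 0))
      = (p * u) * (if i = j then 1 else 0) := by
    rw [← Finset.mul_sum]
    congr 1
    simp [ite_and, Finset.sum_ite_eq]
  have h2 : ∑ l : Fin k, (p * v) * (if i = l then 1 else 0) = p * v := by
    rw [← Finset.mul_sum]
    simp [Finset.sum_ite_eq]
  have h3 : ∑ l : Fin k, (q * u) * (if l = j then 1 else 0) = q * u := by
    rw [← Finset.mul_sum]
    simp [Finset.sum_ite_eq']
  have h4 : ∑ _l : Fin k, q * v = k * (q * v) := by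
    simp [Finset.sum_const, mul_comm]
  rw [h1, h2, h3, h4]
  ring

lemma Mf_comm (p q u v : ℝ) : Mf k p q * Mf k u v = Mf k u v * Mf k p q := by
  rw [Mf_mul, Mf_mul]
  congr 1 <;> ring

lemma Mf_sub (p q u v : ℝ) : Mf k p q - Mf k u v = Mf k (p - u) (q - v) := by
  simp only [Mf, sub_smul]
  abel

lemma Mf_det (hk : 1 ≤ k) {p : ℝ} (hp : p ≠ 0) (q : ℝ) :
    (Mf k p q).det = p ^ (k - 1) * (p + k * q) := by
  have hM : Mf k p q = p • (1 + Matrix.replicateCol (Fin 1) (fun _ : Fin k => (q / p))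
      * Matrix.replicateRow (Fin 1) (fun _ : Fin k => (1:ℝ))) := by
    ext i j
    simp only [Mf_apply, Matrix.smul_apply, Matrix.add_apply, Matrix.one_apply,
      Matrix.mul_apply, Matrix.replicateCol_apply, Matrix.replicateRow_apply, smul_eq_mul]
    rw [Finset.sum_const]
    simp only [Finset.card_univ, Fintype.card_fin, one_smul, pow_zero]
    by_cases h : i = j <;> simp [h] <;> field_simp
  erw [hM, Matrix.det_smul, Matrix.det_one_add_replicateCol_mul_replicateRow]
  have hdot : dotProduct (fun _ : Fin k => (1:ℝ)) (fun _ : Fin k => (q / p))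
      = k * (q / p) := by
    simp [dotProduct, Finset.sum_const, mul_comm]
  rw [hdot, Fintype.card_fin]
  have hpow : (p : ℝ) ^ k = p ^ (k - 1) * p := by
    conv_lhs => rw [show k = (k - 1) + 1 by omega]
    rw [pow_succ]
  rw [hpow]
  field_simp

lemma Mf_inv {p q : ℝ} (hp : p ≠ 0) (hpk : p + k * q ≠ 0) :
    (Mf k p q)⁻¹ = Mf k p⁻¹ (-(q / (p * (p + k * q)))) := by
  apply Matrix.inv_eq_right_inv
  rw [Mf_mul]
  have h1 : p * p⁻¹ = 1 := mul_inv_cancel₀ hp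
  have h2 : p * -(q / (p * (p + ↑k * q))) + q * p⁻¹ + ↑k * (q * -(q / (p * (p + ↑k * q)))) = 0 := by
    have hpk' : q * ↑k + p ≠ 0 := by rw [add_comm, mul_comm]; exact hpk
    field_simp
    linear_combination (-q) * mul_inv_cancel₀ hpk'
  rw [h1, h2, Mf_one]

lemma Mf_mulVec (p q : ℝ) (x : Fin k → ℝ) :
    (Mf k p q).mulVec x = fun i => p * x i + q * ∑ j, x j := by
  funext i
  simp only [Matrix.mulVec, dotProduct, Mf_apply]
  have : ∀ l ∈ Finset.univ, (p * (if i = l then 1 else 0) + q) * x l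
      = p * ((if i = l then x l else 0)) + q * x l := by
    intro l _
    by_cases h : i = l <;> simp [h] <;> ring
  rw [Finset.sum_congr rfl this, Finset.sum_add_distrib, ← Finset.mul_sum, ← Finset.mul_sum]
  simp [Finset.sum_ite_eq]

lemma Mf_dot (p q : ℝ) (x : Fin k → ℝ) :
    dotProduct x ((Mf k p q).mulVec x)
      = p * ∑ i, (x i) ^ 2 + q * (∑ i, x i) ^ 2 := by
  rw [Mf_mulVec]
  simp only [dotProduct]
  have : ∀ l ∈ Finset.univ, x l * (p * x l + q * ∑ j, x j)
      = p * (x l) ^ 2 + q * (x l * ∑ j, x j) := by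
    intro l _; ring
  rw [Finset.sum_congr rfl this, Finset.sum_add_distrib, ← Finset.mul_sum, ← Finset.mul_sum,
    ← Finset.sum_mul]
  ring






lemma continuous_dot (M : Matrix (Fin k) (Fin k) ℝ) :
    Continuous fun x : Fin k → ℝ => dotProduct x (M.mulVec x) := by
  simp only [dotProduct, Matrix.mulVec]
  exact continuous_finset_sum _ fun i _ =>
    (continuous_apply i).mul (continuous_finset_sum _ fun j _ =>
      (continuous_const.mul (continuous_apply j)))

lemma measurable_gaussDens (S : Matrix (Fin k) (Fin k) ℝ) :
    Measurable fun x : Fin k → ℝ =>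
      ENNReal.ofReal (Real.exp (-(dotProduct x (S⁻¹.mulVec x)) / 2)
        / Real.sqrt ((2 * Real.pi) ^ k * S.det)) := by
  apply Measurable.ennreal_ofReal
  exact (((continuous_dot S⁻¹).neg.div_const 2).rexp.div_const _).measurable

lemma map_withDensity_measEquiv {α β : Type*} [MeasurableSpace α] [MeasurableSpace β]
    (μ : Measure α) (e : α ≃ᵐ β) {g : α → ℝ≥0∞} (hg : Measurable g) :
    (μ.withDensity g).map e = (μ.map e).withDensity (fun y => g (e.symm y)) := by
  ext s hs
  rw [MeasurableEquiv.map_apply, withDensity_apply _ (e.measurable hs),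
    withDensity_apply _ hs,
    setLIntegral_map (f := fun a => g (e.symm a)) hs (hg.comp e.symm.measurable) e.measurable]
  simp

lemma dot_helper (B M : Matrix (Fin k) (Fin k) ℝ) (y : Fin k → ℝ) :
    dotProduct (B.mulVec y) (M.mulVec (B.mulVec y))
      = dotProduct y ((B.transpose * M * B).mulVec y) := by
  rw [Matrix.mulVec_mulVec, Matrix.dotProduct_mulVec, ← Matrix.vecMul_transpose,
    Matrix.vecMul_vecMul, Matrix.dotProduct_mulVec y, Matrix.mul_assoc]

lemma sandwich_inv {A S : Matrix (Fin k) (Fin k) ℝ} (hA : IsUnit A.det) (hS : IsUnit S.det) :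
    (A * S * A)⁻¹ = A⁻¹ * S⁻¹ * A⁻¹ := by
  apply Matrix.inv_eq_right_inv
  calc A * S * A * (A⁻¹ * S⁻¹ * A⁻¹)
      = A * S * (A * A⁻¹) * (S⁻¹ * A⁻¹) := by
        simp only [Matrix.mul_assoc]
    _ = A * S * (S⁻¹ * A⁻¹) := by rw [Matrix.mul_nonsing_inv _ hA, Matrix.mul_one]
    _ = A * (S * S⁻¹) * A⁻¹ := by simp only [Matrix.mul_assoc]
    _ = A * A⁻¹ := by rw [Matrix.mul_nonsing_inv _ hS, Matrix.mul_one]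
    _ = 1 := Matrix.mul_nonsing_inv _ hA

lemma gaussianCov_map (hk : 1 ≤ k) {p q u v : ℝ} (hp : 0 < p) (hpk : 0 < p + k * q)
    (hu : 0 < u) (huk : 0 < u + k * v) :
    (gaussianCov (Mf k u v)).map (Matrix.toLin' (Mf k p q)) =
      gaussianCov (Mf k p q * Mf k u v * Mf k p q) := by
  set A := Mf k p q with hAdef
  set S := Mf k u v with hSdef
  have hdetA : A.det = p ^ (k - 1) * (p + k * q) := Mf_det hk hp.ne' q
  have hdetApos : 0 < A.det := by rw [hdetA]; positivity
  have hdetS : S.det = u ^ (k - 1) * (u + k * v) := Mf_det hk hu.ne' v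
  have hdetSpos : 0 < S.det := by rw [hdetS]; positivity
  have hAunit : IsUnit A.det := (IsUnit.mk0 _ hdetApos.ne')
  have hSunit : IsUnit S.det := (IsUnit.mk0 _ hdetSpos.ne')
  letI iA : Invertible A := A.invertibleOfIsUnitDet hAunit
  let e : (Fin k → ℝ) ≃ᵐ (Fin k → ℝ) :=
    (A.toLinearEquiv' iA).toContinuousLinearEquiv.toHomeomorph.toMeasurableEquiv
  have hce : ⇑e = ⇑(Matrix.toLin' A) := rfl
  have hcesymm : ⇑e.symm = fun y => (A⁻¹).mulVec y := by
    funext y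
    have h0 : e.symm y = Matrix.toLin' (⅟A) y := rfl
    rw [h0, Matrix.invOf_eq_nonsing_inv, Matrix.toLin'_apply]
  rw [gaussianCov, ← hce, map_withDensity_measEquiv _ e (measurable_gaussDens S)]
  have hmapvol : (volume : Measure (Fin k → ℝ)).map e
      = ENNReal.ofReal |A.det⁻¹| • volume := by
    rw [hce]
    exact Real.map_matrix_volume_pi_eq_smul_volume_pi hdetApos.ne'
  rw [hmapvol, withDensity_smul_measure, gaussianCov]
  rw [← withDensity_smul' _ _ ENNReal.ofReal_ne_top]
  refine congrArg _ ?_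
  funext y
  rw [Pi.smul_apply, smul_eq_mul, congrFun hcesymm y]
  have hAinvT : (A⁻¹).transpose = A⁻¹ := by
    rw [Mf_inv hp.ne' hpk.ne', Mf_transpose]
  have hquad : dotProduct (A⁻¹.mulVec y) (S⁻¹.mulVec (A⁻¹.mulVec y))
      = dotProduct y ((A * S * A)⁻¹.mulVec y) := by
    rw [dot_helper, hAinvT, sandwich_inv hAunit hSunit]
  have hdet3 : (A * S * A).det = A.det * S.det * A.det := by
    rw [Matrix.det_mul, Matrix.det_mul]
  have hsqrt : Real.sqrt ((2 * π) ^ k * (A * S * A).det)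
      = A.det * Real.sqrt ((2 * π) ^ k * S.det) := by
    rw [hdet3, show (2 * π) ^ k * (A.det * S.det * A.det)
        = A.det ^ 2 * ((2 * π) ^ k * S.det) by ring,
      Real.sqrt_mul (sq_nonneg _), Real.sqrt_sq hdetApos.le]
  rw [hquad, hsqrt, abs_of_pos (inv_pos.mpr hdetApos),
    ← ENNReal.ofReal_mul (by positivity)]
  congr 1
  have hN : 0 < Real.sqrt ((2 * π) ^ k * S.det) := by
    apply Real.sqrt_pos.mpr
    have : (0:ℝ) < (2 * π) ^ k := by positivity
    positivity
  field_simp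







lemma sqrt_pow_k (a : ℝ) (ha : 0 ≤ a) (k : ℕ) : Real.sqrt (a ^ k) = (Real.sqrt a) ^ k := by
  have h1 : ((Real.sqrt a) ^ k) ^ 2 = a ^ k := by
    rw [← pow_mul, mul_comm k 2, pow_mul, Real.sq_sqrt ha]
  rw [← h1, Real.sqrt_sq (by positivity)]

lemma nu_eq : gaussianCov (Mf k 1 0)
    = volume.withDensity (fun x => ENNReal.ofReal (∏ i, g0 (x i))) := by
  unfold gaussianCov
  congr 1
  funext x
  congr 1
  have hinv1 : (1 : Matrix (Fin k) (Fin k) ℝ)⁻¹ = 1 := Matrix.inv_eq_right_inv (by simp)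
  rw [Mf_one, hinv1, Matrix.det_one, Matrix.one_mulVec, mul_one]
  have hdot : dotProduct x x = ∑ i, (x i) ^ 2 := by
    simp [dotProduct, pow_two]
  rw [hdot, sqrt_pow_k _ (by positivity)]
  unfold g0
  rw [Finset.prod_div_distrib, Finset.prod_const, Finset.card_univ, Fintype.card_fin,
    ← Real.exp_sum]
  congr 2
  rw [neg_div, Finset.sum_div, ← Finset.sum_neg_distrib]
  exact Finset.sum_congr rfl (fun i _ => by ring)

lemma prodg0_nonneg (x : Fin k → ℝ) : 0 ≤ ∏ i, g0 (x i) :=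
  Finset.prod_nonneg fun i _ => g0_nonneg _

lemma measurable_prodg0 : Measurable fun x : Fin k → ℝ => (∏ i, g0 (x i)).toNNReal :=
  (continuous_finset_prod _ fun i _ => g0_continuous.comp (continuous_apply i)).measurable.real_toNNReal

lemma integrable_prodg0 : Integrable (fun x : Fin k → ℝ => ∏ i, g0 (x i)) :=
  Integrable.fintype_prod (𝕜 := ℝ) fun _ => integrable_g0

lemma nu_prob : IsProbabilityMeasure (gaussianCov (Mf k 1 0)) := by
  constructor
  rw [nu_eq, withDensity_apply _ MeasurableSet.univ, Measure.restrict_univ,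
    ← ofReal_integral_eq_lintegral_ofReal integrable_prodg0
      (Filter.Eventually.of_forall prodg0_nonneg),
    MeasureTheory.integral_fintype_prod_volume_eq_prod (fun _ => g0)]
  simp [integral_g0]

/-- coordinate-moment auxiliary family -/
def hfun (l m i : Fin k) : ℝ → ℝ :=
  fun t => (if i = l then t else 1) * ((if i = m then t else 1) * g0 t)

lemma hfun_integrable (l m i : Fin k) : Integrable (hfun l m i) := by
  unfold hfun
  by_cases hl : i = l
  · by_cases hm : i = m
    · simp only [if_pos hl, if_pos hm]
      simpa [pow_two, mul_assoc] using integrable_sq_mul_g0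
    · simp only [if_pos hl, if_neg hm, one_mul]
      exact integrable_mul_g0
  · by_cases hm : i = m
    · simp only [if_neg hl, if_pos hm, one_mul]
      exact integrable_mul_g0
    · simp only [if_neg hl, if_neg hm, one_mul]
      exact integrable_g0

lemma hfun_integral (l m i : Fin k) :
    ∫ t, hfun l m i t = if i = l then (if i = m then 1 else 0) else (if i = m then 0 else 1) := by
  unfold hfun
  by_cases hl : i = l
  · by_cases hm : i = m
    · simp only [if_pos hl, if_pos hm]
      simpa [pow_two, mul_assoc] using integral_sq_mul_g0
    · simp only [if_pos hl, if_neg hm, one_mul]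
      exact integral_mul_g0
  · by_cases hm : i = m
    · simp only [if_neg hl, if_pos hm, one_mul]
      exact integral_mul_g0
    · simp only [if_neg hl, if_neg hm, one_mul]
      exact integral_g0

lemma hfun_prod (l m : Fin k) (x : Fin k → ℝ) :
    (∏ i, g0 (x i)) * (x l * x m) = ∏ i, hfun l m i (x i) := by
  unfold hfun
  rw [Finset.prod_mul_distrib, Finset.prod_mul_distrib]
  have h1 : (∏ i, if i = l then x i else 1) = x l := by
    rw [Finset.prod_ite_eq' Finset.univ l (fun i => x i)]
    simp
  have h2 : (∏ i, if i = m then x i else 1) = x m := by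
    rw [Finset.prod_ite_eq' Finset.univ m (fun i => x i)]
    simp
  rw [h1, h2]
  ring

lemma dens_ofReal_eq (x : Fin k → ℝ) :
    ENNReal.ofReal (∏ i, g0 (x i)) = ((∏ i, g0 (x i)).toNNReal : ℝ≥0∞) := rfl

lemma nu_integral_mul (l m : Fin k) :
    ∫ x, x l * x m ∂(gaussianCov (Mf k 1 0)) = if l = m then 1 else 0 := by
  rw [nu_eq]
  simp only [dens_ofReal_eq]
  rw [integral_withDensity_eq_integral_smul measurable_prodg0]
  have : ∀ x : Fin k → ℝ, (∏ i, g0 (x i)).toNNReal • (x l * x m)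
      = ∏ i, hfun l m i (x i) := by
    intro x
    rw [NNReal.smul_def, smul_eq_mul, Real.coe_toNNReal _ (prodg0_nonneg x), hfun_prod]
  rw [integral_congr_ae (Filter.Eventually.of_forall this)]
  rw [MeasureTheory.integral_fintype_prod_volume_eq_prod (hfun l m)]
  by_cases hlm : l = m
  · subst hlm
    rw [Finset.prod_eq_single l (fun i _ hi => by rw [hfun_integral]; simp [hi])
      (by simp)]
    rw [hfun_integral]
    simp
  · have hzero : (∫ t, hfun l m l t) = 0 := by
      rw [hfun_integral]
      simp [hlm]
    rw [Finset.prod_eq_zero (Finset.mem_univ l) hzero, if_neg hlm]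

lemma nu_integrable_mul (l m : Fin k) :
    Integrable (fun x => x l * x m) (gaussianCov (Mf k 1 0)) := by
  rw [nu_eq]
  simp only [dens_ofReal_eq]
  rw [integrable_withDensity_iff_integrable_smul measurable_prodg0]
  have : ∀ x : Fin k → ℝ, (∏ i, g0 (x i)).toNNReal • (x l * x m)
      = ∏ i, hfun l m i (x i) := by
    intro x
    rw [NNReal.smul_def, smul_eq_mul, Real.coe_toNNReal _ (prodg0_nonneg x), hfun_prod]
  rw [show (fun x : Fin k → ℝ => (∏ i, g0 (x i)).toNNReal • (x l * x m))
      = fun x => ∏ i, hfun l m i (x i) from funext this]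
  exact Integrable.fintype_prod (𝕜 := ℝ) (hfun_integrable l m)






---------------------------------------------------------------------------
-- ν-level second moments
---------------------------------------------------------------------------

lemma nu_integrable_sumsq :
    Integrable (fun z : Fin k → ℝ => ∑ i, (z i) ^ 2) (gaussianCov (Mf k 1 0)) := by
  have : (fun z : Fin k → ℝ => ∑ i, (z i) ^ 2) = fun z => ∑ i, z i * z i := by
    funext z; exact Finset.sum_congr rfl fun i _ => sq (z i) ▸ (pow_two (z i))
  rw [this]
  exact integrable_finset_sum _ fun i _ => nu_integrable_mul i i

lemma nu_integral_sumsq :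
    ∫ z, ∑ i, (z i) ^ 2 ∂(gaussianCov (Mf k 1 0)) = k := by
  have h : (fun z : Fin k → ℝ => ∑ i, (z i) ^ 2) = fun z => ∑ i, z i * z i := by
    funext z; exact Finset.sum_congr rfl fun i _ => pow_two (z i)
  rw [h, integral_finset_sum _ fun i _ => nu_integrable_mul i i]
  simp [nu_integral_mul]

lemma sq_sum_eq (z : Fin k → ℝ) : (∑ i, z i) ^ 2 = ∑ l, ∑ m, z l * z m := by
  rw [pow_two, Finset.sum_mul_sum]

lemma nu_integrable_sqsum :
    Integrable (fun z : Fin k → ℝ => (∑ i, z i) ^ 2) (gaussianCov (Mf k 1 0)) := by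
  have : (fun z : Fin k → ℝ => (∑ i, z i) ^ 2) = fun z => ∑ l, ∑ m, z l * z m := by
    funext z; exact sq_sum_eq z
  rw [this]
  exact integrable_finset_sum _ fun l _ => integrable_finset_sum _ fun m _ =>
    nu_integrable_mul l m

lemma nu_integral_sqsum :
    ∫ z, (∑ i, z i) ^ 2 ∂(gaussianCov (Mf k 1 0)) = k := by
  have h : (fun z : Fin k → ℝ => (∑ i, z i) ^ 2) = fun z => ∑ l, ∑ m, z l * z m := by
    funext z; exact sq_sum_eq z
  rw [h, integral_finset_sum _ fun l _ => integrable_finset_sum _ fun m _ =>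
    nu_integrable_mul l m]
  have : ∀ l : Fin k, ∫ z, ∑ m, z l * z m ∂(gaussianCov (Mf k 1 0)) = 1 := by
    intro l
    rw [integral_finset_sum _ fun m _ => nu_integrable_mul l m]
    simp [nu_integral_mul]
  rw [Finset.sum_congr rfl fun l _ => this l]
  simp

---------------------------------------------------------------------------
-- pointwise expansions
---------------------------------------------------------------------------

lemma sum_mulVec (p q : ℝ) (z : Fin k → ℝ) :
    ∑ i, (Mf k p q).mulVec z i = (p + k * q) * ∑ j, z j := by
  rw [Mf_mulVec]
  rw [Finset.sum_add_distrib, ← Finset.mul_sum, Finset.sum_const, Finset.card_univ,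
    Fintype.card_fin, nsmul_eq_mul]
  ring

lemma sumsq_mulVec (p q : ℝ) (z : Fin k → ℝ) :
    ∑ i, ((Mf k p q).mulVec z i) ^ 2
      = p ^ 2 * (∑ i, (z i) ^ 2) + (2 * p * q + k * q ^ 2) * (∑ j, z j) ^ 2 := by
  rw [Mf_mulVec]
  have h : ∀ i ∈ Finset.univ, (p * z i + q * ∑ j, z j) ^ 2
      = p ^ 2 * (z i) ^ 2 + 2 * p * q * (z i * ∑ j, z j) + q ^ 2 * (∑ j, z j) ^ 2 := by
    intro i _; ring
  rw [Finset.sum_congr rfl h, Finset.sum_add_distrib, Finset.sum_add_distrib,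
    ← Finset.mul_sum, ← Finset.mul_sum, ← Finset.mul_sum, ← Finset.sum_mul,
    Finset.sum_const, Finset.card_univ, Fintype.card_fin, nsmul_eq_mul]
  ring

---------------------------------------------------------------------------
-- moments of mapped measures
---------------------------------------------------------------------------

lemma continuous_toLin (M : Matrix (Fin k) (Fin k) ℝ) :
    Continuous (Matrix.toLin' M) := LinearMap.continuous_on_pi _

lemma map_integral (p q : ℝ) (g : (Fin k → ℝ) → ℝ) (hg : Continuous g) :
    ∫ x, g x ∂((gaussianCov (Mf k 1 0)).map (Matrix.toLin' (Mf k p q)))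
      = ∫ z, g ((Mf k p q).mulVec z) ∂(gaussianCov (Mf k 1 0)) := by
  rw [integral_map (continuous_toLin _).aemeasurable hg.aestronglyMeasurable]
  simp only [Matrix.toLin'_apply]

lemma map_integrable (p q : ℝ) (g : (Fin k → ℝ) → ℝ) (hg : Continuous g)
    (h : Integrable (fun z => g ((Mf k p q).mulVec z)) (gaussianCov (Mf k 1 0))) :
    Integrable g ((gaussianCov (Mf k 1 0)).map (Matrix.toLin' (Mf k p q))) := by
  rw [integrable_map_measure hg.aestronglyMeasurable (continuous_toLin _).aemeasurable]
  apply h.congr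
  apply Filter.Eventually.of_forall
  intro z
  simp only [Function.comp_apply, Matrix.toLin'_apply]

lemma M1 (p q : ℝ) :
    ∫ x, (∑ i, x i) ^ 2 ∂((gaussianCov (Mf k 1 0)).map (Matrix.toLin' (Mf k p q)))
      = (p + k * q) ^ 2 * k := by
  rw [map_integral p q _ (by fun_prop)]
  have h : ∀ z : Fin k → ℝ, (∑ i, (Mf k p q).mulVec z i) ^ 2
      = (p + k * q) ^ 2 * (∑ j, z j) ^ 2 := by
    intro z; rw [sum_mulVec]; ring
  rw [integral_congr_ae (Filter.Eventually.of_forall fun z => h z), integral_const_mul,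
    nu_integral_sqsum]

lemma I1 (p q : ℝ) :
    Integrable (fun x => (∑ i, x i) ^ 2)
      ((gaussianCov (Mf k 1 0)).map (Matrix.toLin' (Mf k p q))) := by
  apply map_integrable p q _ (by fun_prop)
  have h : (fun z : Fin k → ℝ => (∑ i, (Mf k p q).mulVec z i) ^ 2)
      = fun z => (p + k * q) ^ 2 * (∑ j, z j) ^ 2 := by
    funext z; rw [sum_mulVec]; ring
  rw [h]
  exact nu_integrable_sqsum.const_mul _

lemma M2 (p q : ℝ) :
    ∫ x, ∑ i, (x i) ^ 2 ∂((gaussianCov (Mf k 1 0)).map (Matrix.toLin' (Mf k p q)))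
      = p ^ 2 * k + (2 * p * q + k * q ^ 2) * k := by
  rw [map_integral p q _ (by fun_prop)]
  rw [integral_congr_ae (Filter.Eventually.of_forall fun z => sumsq_mulVec p q z)]
  rw [integral_add ((nu_integrable_sumsq).const_mul _) ((nu_integrable_sqsum).const_mul _),
    integral_const_mul, integral_const_mul, nu_integral_sumsq, nu_integral_sqsum]

lemma I2 (p q : ℝ) :
    Integrable (fun x => ∑ i, (x i) ^ 2)
      ((gaussianCov (Mf k 1 0)).map (Matrix.toLin' (Mf k p q))) := by
  apply map_integrable p q _ (by fun_prop)
  have h : (fun z : Fin k → ℝ => ∑ i, ((Mf k p q).mulVec z i) ^ 2)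
      = fun z => p ^ 2 * (∑ i, (z i) ^ 2) + (2 * p * q + k * q ^ 2) * (∑ j, z j) ^ 2 := by
    funext z; exact sumsq_mulVec p q z
  rw [h]
  exact ((nu_integrable_sumsq).const_mul _).add ((nu_integrable_sqsum).const_mul _)

lemma I3 (p q : ℝ) (l m : Fin k) :
    Integrable (fun x => x l * x m)
      ((gaussianCov (Mf k 1 0)).map (Matrix.toLin' (Mf k p q))) := by
  apply map_integrable p q _ (by fun_prop)
  have h : (fun z : Fin k → ℝ => (Mf k p q).mulVec z l * (Mf k p q).mulVec z m)
      = fun z => p ^ 2 * (z l * z m) + (p * q) * (∑ j, z l * z j)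
          + (p * q) * (∑ j, z m * z j) + q ^ 2 * ∑ a, ∑ b, z a * z b := by
    funext z
    rw [Mf_mulVec]
    simp only
    rw [← Finset.mul_sum, ← Finset.mul_sum,
      show (∑ a, ∑ b, z a * z b) = (∑ j, z j) * (∑ j, z j) from
        ((sq_sum_eq z) ▸ (pow_two (∑ j, z j)) : _)]
    ring
  rw [h]
  exact ((((nu_integrable_mul l m).const_mul _).add
    ((integrable_finset_sum _ fun j _ => nu_integrable_mul l j).const_mul _)).add
    ((integrable_finset_sum _ fun j _ => nu_integrable_mul m j).const_mul _)).add
    ((integrable_finset_sum _ fun a _ => integrable_finset_sum _ fun b _ =>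
      nu_integrable_mul a b).const_mul _)


---------------------------------------------------------------------------
-- Cauchy–Schwarz helpers
---------------------------------------------------------------------------

lemma mul_le_quad {a b L M : ℝ} (hL : 0 < L) (hM : 0 < M) (hLM : L * M = 1) :
    a * b ≤ (L * a ^ 2 + M * b ^ 2) / 2 := by
  nlinarith [mul_nonneg hM.le (sq_nonneg (L * a - b)), sq_nonneg (L * a - b), hL.le, hM.le]

lemma cs_aux {c A B : ℝ} (hA : 0 ≤ A) (hB : 0 ≤ B)
    (h : ∀ L M : ℝ, 0 < L → 0 < M → L * M = 1 → c ≤ (L * A + M * B) / 2) :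
    c ≤ Real.sqrt A * Real.sqrt B := by
  rcases hA.eq_or_lt with hA0 | hApos
  · have hc : c ≤ 0 := by
      refine le_of_forall_pos_le_add fun ε hε => ?_
      have hM : (0:ℝ) < 2 * ε / (B + 1) := by positivity
      have hL : (0:ℝ) < (B + 1) / (2 * ε) := by positivity
      have hLM : (B + 1) / (2 * ε) * (2 * ε / (B + 1)) = 1 := by
        field_simp
      have hcb := h _ _ hL hM hLM
      rw [← hA0, mul_zero, zero_add] at hcb
      have hle : 2 * ε / (B + 1) * B ≤ 2 * ε := by
        rw [div_mul_eq_mul_div, div_le_iff₀ (by positivity)]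
        nlinarith
      linarith
    have hz : Real.sqrt A * Real.sqrt B = 0 := by
      rw [← hA0, Real.sqrt_zero, zero_mul]
    linarith
  · rcases hB.eq_or_lt with hB0 | hBpos
    · have hc : c ≤ 0 := by
        refine le_of_forall_pos_le_add fun ε hε => ?_
        have hL : (0:ℝ) < 2 * ε / (A + 1) := by positivity
        have hM : (0:ℝ) < (A + 1) / (2 * ε) := by positivity
        have hLM : 2 * ε / (A + 1) * ((A + 1) / (2 * ε)) = 1 := by
          field_simp
        have hcb := h _ _ hL hM hLM
        rw [← hB0, mul_zero, add_zero] at hcb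
        have hle : 2 * ε / (A + 1) * A ≤ 2 * ε := by
          rw [div_mul_eq_mul_div, div_le_iff₀ (by positivity)]
          nlinarith
        linarith
      have hz : Real.sqrt A * Real.sqrt B = 0 := by
        rw [← hB0, Real.sqrt_zero, mul_zero]
      linarith
    · have hL : (0:ℝ) < Real.sqrt B / Real.sqrt A :=
        div_pos (Real.sqrt_pos.mpr hBpos) (Real.sqrt_pos.mpr hApos)
      have hM : (0:ℝ) < Real.sqrt A / Real.sqrt B :=
        div_pos (Real.sqrt_pos.mpr hApos) (Real.sqrt_pos.mpr hBpos)
      have hLM : Real.sqrt B / Real.sqrt A * (Real.sqrt A / Real.sqrt B) = 1 := by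
        field_simp
      have hcb := h _ _ hL hM hLM
      have e1 : Real.sqrt B / Real.sqrt A * A = Real.sqrt B * Real.sqrt A := by
        rw [div_mul_eq_mul_div, mul_div_assoc, Real.div_sqrt]
      have e2 : Real.sqrt A / Real.sqrt B * B = Real.sqrt A * Real.sqrt B := by
        rw [div_mul_eq_mul_div, mul_div_assoc, Real.div_sqrt]
      rw [e1, e2] at hcb
      have : Real.sqrt B * Real.sqrt A = Real.sqrt A * Real.sqrt B := mul_comm _ _
      linarith

---------------------------------------------------------------------------
-- coupling transfer
---------------------------------------------------------------------------

lemma transfer_fst {μ : Measure (Fin k → ℝ)} {pp : Measure ((Fin k → ℝ) × (Fin k → ℝ))}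
    (hfst : pp.map Prod.fst = μ) (g : (Fin k → ℝ) → ℝ) (hg : Continuous g)
    (hgi : Integrable g μ) :
    Integrable (fun p : (Fin k → ℝ) × (Fin k → ℝ) => g p.1) pp
      ∧ ∫ p, g p.1 ∂pp = ∫ x, g x ∂μ := by
  constructor
  · have h1 : Integrable g (pp.map Prod.fst) := by rw [hfst]; exact hgi
    exact (integrable_map_measure hg.aestronglyMeasurable
      measurable_fst.aemeasurable).mp h1
  · have h2 := integral_map (measurable_fst.aemeasurable (μ := pp)) hg.aestronglyMeasurable
    rw [hfst] at h2
    exact h2.symm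

lemma transfer_snd {μ : Measure (Fin k → ℝ)} {pp : Measure ((Fin k → ℝ) × (Fin k → ℝ))}
    (hsnd : pp.map Prod.snd = μ) (g : (Fin k → ℝ) → ℝ) (hg : Continuous g)
    (hgi : Integrable g μ) :
    Integrable (fun p : (Fin k → ℝ) × (Fin k → ℝ) => g p.2) pp
      ∧ ∫ p, g p.2 ∂pp = ∫ x, g x ∂μ := by
  constructor
  · have h1 : Integrable g (pp.map Prod.snd) := by rw [hsnd]; exact hgi
    exact (integrable_map_measure hg.aestronglyMeasurable
      measurable_snd.aemeasurable).mp h1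
  · have h2 := integral_map (measurable_snd.aemeasurable (μ := pp)) hg.aestronglyMeasurable
    rw [hsnd] at h2
    exact h2.symm

---------------------------------------------------------------------------
-- pointwise sum identities
---------------------------------------------------------------------------

lemma hw_id (hk : 1 ≤ k) (x : Fin k → ℝ) :
    ∑ i, (x i - (∑ j, x j) / k) ^ 2 = (∑ i, (x i) ^ 2) - (∑ j, x j) ^ 2 / k := by
  have hk0 : ((k:ℝ)) ≠ 0 := by
    have : (0:ℕ) < k := hk
    exact_mod_cast this.ne'
  have hterm : ∀ i ∈ Finset.univ, (x i - (∑ j, x j) / k) ^ 2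
      = (x i) ^ 2 - (2 * ((∑ j, x j) / k)) * x i + ((∑ j, x j) / k) ^ 2 := by
    intro i _; ring
  rw [Finset.sum_congr rfl hterm, Finset.sum_add_distrib, Finset.sum_sub_distrib,
    ← Finset.mul_sum, Finset.sum_const, Finset.card_univ, Fintype.card_fin, nsmul_eq_mul]
  field_simp
  ring

lemma hsplit_id (hk : 1 ≤ k) (X Y : Fin k → ℝ) :
    ∑ i, X i * Y i = (∑ i, X i) * (∑ i, Y i) / k
      + ∑ i, (X i - (∑ j, X j) / k) * (Y i - (∑ j, Y j) / k) := by
  have hk0 : ((k:ℝ)) ≠ 0 := by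
    have : (0:ℕ) < k := hk
    exact_mod_cast this.ne'
  have hterm : ∀ i ∈ Finset.univ, (X i - (∑ j, X j) / k) * (Y i - (∑ j, Y j) / k)
      = X i * Y i - ((∑ j, Y j) / k) * X i - ((∑ j, X j) / k) * Y i
        + ((∑ j, X j) * (∑ j, Y j)) / k ^ 2 := by
    intro i _; ring
  rw [Finset.sum_congr rfl hterm, Finset.sum_add_distrib, Finset.sum_sub_distrib,
    Finset.sum_sub_distrib, ← Finset.mul_sum, ← Finset.mul_sum, Finset.sum_const,
    Finset.card_univ, Fintype.card_fin, nsmul_eq_mul]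
  field_simp
  ring


end

end W2Aux
open W2Aux in
set_option maxHeartbeats 1000000 in
theorem stmt_11 (a b : ℝ) (ha : 0 < a) (hb : 0 < b) (n k : ℕ) (hk : 1 ≤ k)
    (hkn : k < n) :
    let J : Matrix (Fin k) (Fin k) ℝ := Matrix.of fun _ _ => 1
    let dn : ℝ := 1 / (a + b * n / ((n : ℝ) - 1))
    let cn : ℝ := b / (a * ((n : ℝ) - 1))
    W2sq (gaussianCov (dn • ((1 : Matrix (Fin k) (Fin k) ℝ) + cn • J)))
         (gaussianCov ((a + b)⁻¹ • (1 : Matrix (Fin k) (Fin k) ℝ)))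
      = ((k : ℝ) - 1) * (a + b)⁻¹ * (Real.sqrt (dn * (a + b)) - 1) ^ 2
        + (a + b)⁻¹ * (Real.sqrt (dn * (a + b) * (1 + k * cn)) - 1) ^ 2 := by
  intro J dn cn
  -- scalar positivity facts
  have hk0 : (0:ℝ) < k := by exact_mod_cast hk
  have hk1 : (1:ℝ) ≤ k := by exact_mod_cast hk
  have hn2 : (2:ℝ) ≤ n := by exact_mod_cast (by omega : 2 ≤ n)
  have hnn : (0:ℝ) < (n:ℝ) - 1 := by linarith only [hn2]
  have hdn : 0 < dn := by
    have hden : 0 < a + b * n / ((n:ℝ) - 1) := by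
      have h1 : 0 ≤ b * n / ((n:ℝ) - 1) := div_nonneg (by positivity) hnn.le
      linarith only [ha, h1]
    rw [show dn = 1 / (a + b * n / ((n : ℝ) - 1)) from rfl]
    positivity
  have hcn : 0 < cn := by
    rw [show cn = b / (a * ((n : ℝ) - 1)) from rfl]
    exact div_pos hb (mul_pos ha hnn)
  set s : ℝ := (a + b)⁻¹ with hs_def
  have hab : 0 < a + b := by linarith only [ha, hb]
  have hs : 0 < s := inv_pos.mpr hab
  have h1kcn : 0 < 1 + (k:ℝ) * cn := by
    have := mul_pos hk0 hcn
    linarith only [this]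
  set p1 : ℝ := Real.sqrt dn with hp1_def
  set r1 : ℝ := Real.sqrt (dn * (1 + (k:ℝ) * cn)) with hr1_def
  set p2 : ℝ := Real.sqrt s with hp2_def
  set q1 : ℝ := (r1 - p1) / k with hq1_def
  have hp1 : 0 < p1 := Real.sqrt_pos.mpr hdn
  have hr1 : 0 < r1 := Real.sqrt_pos.mpr (mul_pos hdn h1kcn)
  have hp2 : 0 < p2 := Real.sqrt_pos.mpr hs
  have hp1sq : p1 ^ 2 = dn := Real.sq_sqrt hdn.le
  have hr1sq : r1 ^ 2 = dn * (1 + (k:ℝ) * cn) := Real.sq_sqrt (mul_pos hdn h1kcn).le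
  have hp2sq : p2 ^ 2 = s := Real.sq_sqrt hs.le
  have hp1q1 : p1 + (k:ℝ) * q1 = r1 := by
    rw [hq1_def]; field_simp; ring
  have hq1pos : 0 < p1 + (k:ℝ) * q1 := hp1q1 ▸ hr1
  -- matrices
  have hS1 : dn • ((1 : Matrix (Fin k) (Fin k) ℝ) + cn • J) = Mf k dn (dn * cn) := by
    show dn • ((1 : Matrix (Fin k) (Fin k) ℝ) + cn • J)
      = dn • (1 : Matrix (Fin k) (Fin k) ℝ) + (dn * cn) • Matrix.of (fun _ _ => (1:ℝ))
    rw [smul_add, smul_smul]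
  have hS2 : s • (1 : Matrix (Fin k) (Fin k) ℝ) = Mf k s 0 := by
    show s • (1 : Matrix (Fin k) (Fin k) ℝ)
      = s • (1 : Matrix (Fin k) (Fin k) ℝ) + (0:ℝ) • Matrix.of (fun _ _ => (1:ℝ))
    rw [zero_smul, add_zero]
  rw [hS1, hS2]
  set m1 : Measure (Fin k → ℝ) := gaussianCov (Mf k dn (dn * cn)) with hm1_def
  set m2 : Measure (Fin k → ℝ) := gaussianCov (Mf k s 0) with hm2_def
  -- the pushforward identities
  have hA1 : Mf k p1 q1 * Mf k 1 0 * Mf k p1 q1 = Mf k dn (dn * cn) := by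
    rw [Mf_one, Matrix.mul_one, Mf_mul]
    have hqq : p1 * q1 + q1 * p1 + (k:ℝ) * (q1 * q1) = dn * cn := by
      have h : (p1 + (k:ℝ) * q1) ^ 2
          = p1 ^ 2 + (k:ℝ) * (p1 * q1 + q1 * p1 + (k:ℝ) * (q1 * q1)) := by ring
      rw [hp1q1, hr1sq, hp1sq] at h
      apply mul_left_cancel₀ hk0.ne'
      linear_combination -h
    rw [show p1 * p1 = dn from by rw [← pow_two]; exact hp1sq, hqq]
  have hA2 : Mf k p2 0 * Mf k 1 0 * Mf k p2 0 = Mf k s 0 := by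
    rw [Mf_one, Matrix.mul_one, Mf_mul]
    simp only [mul_zero, zero_mul, add_zero]
    rw [show p2 * p2 = s from by rw [← pow_two]; exact hp2sq]
  have hmap1 : (gaussianCov (Mf k 1 0)).map (Matrix.toLin' (Mf k p1 q1)) = m1 := by
    rw [gaussianCov_map hk hp1 hq1pos one_pos (by norm_num : (0:ℝ) < 1 + (k:ℝ) * 0), hA1]
  have hmap2 : (gaussianCov (Mf k 1 0)).map (Matrix.toLin' (Mf k p2 0)) = m2 := by
    rw [gaussianCov_map hk hp2 (by simpa using hp2) one_pos
      (by norm_num : (0:ℝ) < 1 + (k:ℝ) * 0), hA2]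
  haveI hνP : IsProbabilityMeasure (gaussianCov (Mf k 1 0)) := nu_prob
  haveI hμ1P : IsProbabilityMeasure m1 := by
    rw [← hmap1]; exact Measure.isProbabilityMeasure_map (continuous_toLin _).aemeasurable
  haveI hμ2P : IsProbabilityMeasure m2 := by
    rw [← hmap2]; exact Measure.isProbabilityMeasure_map (continuous_toLin _).aemeasurable
  -- target value
  set V : ℝ := ((k:ℝ) - 1) * (p1 - p2) ^ 2 + (r1 - p2) ^ 2 with hV_def
  have hVR : ((k : ℝ) - 1) * s * (Real.sqrt (dn * (a + b)) - 1) ^ 2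
        + s * (Real.sqrt (dn * (a + b) * (1 + k * cn)) - 1) ^ 2 = V := by
    have hab' : a + b = s⁻¹ := by rw [hs_def, inv_inv]
    have h1 : Real.sqrt (dn * (a + b)) = p1 / p2 := by
      rw [hab', show dn * s⁻¹ = dn / s from (div_eq_mul_inv dn s).symm,
        Real.sqrt_div hdn.le, hp1_def, hp2_def]
    have h2 : Real.sqrt (dn * (a + b) * (1 + k * cn)) = r1 / p2 := by
      rw [hab', show dn * s⁻¹ * (1 + (k:ℝ) * cn) = (dn * (1 + (k:ℝ) * cn)) / s from by
        rw [div_eq_mul_inv]; ring, Real.sqrt_div (mul_pos hdn h1kcn).le, hr1_def, hp2_def]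
    rw [h1, h2, hV_def, ← hp2sq]
    field_simp
  rw [hVR]
  -- cost function continuity
  have hcostcont : Continuous fun p : (Fin k → ℝ) × (Fin k → ℝ) =>
      ∑ i, (p.1 i - p.2 i) ^ 2 :=
    continuous_finset_sum _ fun i _ =>
      (((continuous_apply i).comp continuous_fst).sub
        ((continuous_apply i).comp continuous_snd)).pow 2
  -- the explicit optimal coupling
  set T : Matrix (Fin k) (Fin k) ℝ := Mf k (p2 / p1) ((p2 / r1 - p2 / p1) / k) with hT_def
  have hTA1 : T * Mf k p1 q1 = Mf k p2 0 := by
    rw [hT_def, Mf_mul]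
    rw [show p2 / p1 * p1 = p2 from by field_simp]
    rw [show p2 / p1 * q1 + (p2 / r1 - p2 / p1) / k * p1
        + (k:ℝ) * ((p2 / r1 - p2 / p1) / k * q1) = 0 from by
      rw [hq1_def]; field_simp; ring]
  set φ : (Fin k → ℝ) → (Fin k → ℝ) × (Fin k → ℝ) :=
    fun x => (x, Matrix.toLin' T x) with hφ_def
  have hφm : Measurable φ := measurable_id.prodMk (continuous_toLin T).measurable
  have hfst0 : (m1.map φ).map Prod.fst = m1 := by
    rw [Measure.map_map measurable_fst hφm]
    rw [show (Prod.fst ∘ φ) = id from rfl, Measure.map_id]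
  have hsnd0 : (m1.map φ).map Prod.snd = m2 := by
    rw [Measure.map_map measurable_snd hφm]
    rw [show (Prod.snd ∘ φ) = ⇑(Matrix.toLin' T) from rfl]
    rw [← hmap1, Measure.map_map (continuous_toLin T).measurable
      (continuous_toLin _).measurable]
    have hcomp : ⇑(Matrix.toLin' T) ∘ ⇑(Matrix.toLin' (Mf k p1 q1))
        = ⇑(Matrix.toLin' (T * Mf k p1 q1)) := by
      rw [Matrix.toLin'_mul]; rfl
    rw [hcomp, hTA1, hmap2]
  have hcost0 : ∫ p, ∑ i, (p.1 i - p.2 i) ^ 2 ∂(m1.map φ) = V := by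
    rw [integral_map hφm.aemeasurable hcostcont.aestronglyMeasurable]
    rw [← hmap1, integral_map (continuous_toLin _).aemeasurable
      (by fun_prop : Continuous fun x : Fin k → ℝ =>
        ∑ i, ((φ x).1 i - (φ x).2 i) ^ 2).aestronglyMeasurable]
    have hptc : ∀ z : Fin k → ℝ,
        (∑ i, ((φ (Matrix.toLin' (Mf k p1 q1) z)).1 i
          - (φ (Matrix.toLin' (Mf k p1 q1) z)).2 i) ^ 2)
        = ∑ i, ((Mf k (p1 - p2) (q1 - 0)).mulVec z i) ^ 2 := by
      intro z
      simp only [hφ_def, Matrix.toLin'_apply, Matrix.mulVec_mulVec]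
      rw [hTA1, ← Mf_sub]
      simp only [Matrix.sub_mulVec, Pi.sub_apply]
    rw [integral_congr_ae (Filter.Eventually.of_forall hptc)]
    rw [integral_congr_ae (Filter.Eventually.of_forall fun z =>
      sumsq_mulVec (p1 - p2) (q1 - 0) z)]
    rw [integral_add (nu_integrable_sumsq.const_mul _) (nu_integrable_sqsum.const_mul _),
      integral_const_mul, integral_const_mul, nu_integral_sumsq, nu_integral_sqsum]
    rw [hV_def, ← hp1q1]
    ring
  -- membership of V
  have hmem : V ∈ { r : ℝ | ∃ π : Measure ((Fin k → ℝ) × (Fin k → ℝ)),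
      IsProbabilityMeasure π ∧ π.map Prod.fst = m1 ∧ π.map Prod.snd = m2 ∧
      r = ∫ p, ∑ i, (p.1 i - p.2 i) ^ 2 ∂π } := by
    exact ⟨m1.map φ, Measure.isProbabilityMeasure_map hφm.aemeasurable, hfst0, hsnd0, hcost0.symm⟩
  -- lower bound
  have hlow : ∀ r ∈ { r : ℝ | ∃ π : Measure ((Fin k → ℝ) × (Fin k → ℝ)),
      IsProbabilityMeasure π ∧ π.map Prod.fst = m1 ∧ π.map Prod.snd = m2 ∧
      r = ∫ p, ∑ i, (p.1 i - p.2 i) ^ 2 ∂π }, V ≤ r := by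
    rintro r ⟨π, hπP, hfst, hsnd, hr⟩
    -- moment values
    have hM1v : ∫ x, (∑ i, x i) ^ 2 ∂m1 = r1 ^ 2 * k := by
      rw [← hmap1, M1 p1 q1, hp1q1]
    have hM2v : ∫ x, ∑ i, (x i) ^ 2 ∂m1 = ((k:ℝ) - 1) * p1 ^ 2 + r1 ^ 2 := by
      rw [← hmap1, M2 p1 q1, ← hp1q1]; ring
    have hM1v' : ∫ x, (∑ i, x i) ^ 2 ∂m2 = p2 ^ 2 * k := by
      rw [← hmap2, M1 p2 0]; ring
    have hM2v' : ∫ x, ∑ i, (x i) ^ 2 ∂m2 = (k:ℝ) * p2 ^ 2 := by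
      rw [← hmap2, M2 p2 0]; ring
    -- transfers
    have hcont1 : Continuous fun x : Fin k → ℝ => (∑ i, x i) ^ 2 := by fun_prop
    have hcont2 : Continuous fun x : Fin k → ℝ => ∑ i, (x i) ^ 2 := by fun_prop
    have hIX1 := transfer_fst hfst _ hcont1 (by rw [← hmap1]; exact I1 p1 q1)
    have hIX2 := transfer_fst hfst _ hcont2 (by rw [← hmap1]; exact I2 p1 q1)
    have hIY1 := transfer_snd hsnd _ hcont1 (by rw [← hmap2]; exact I1 p2 0)
    have hIY2 := transfer_snd hsnd _ hcont2 (by rw [← hmap2]; exact I2 p2 0)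
    have hIX1i : Integrable (fun p : (Fin k → ℝ) × (Fin k → ℝ) => (∑ i, p.1 i) ^ 2) π :=
      hIX1.1
    have hIX1v : ∫ p, (∑ i, p.1 i) ^ 2 ∂π = r1 ^ 2 * k := hIX1.2.trans hM1v
    have hIX2i : Integrable (fun p : (Fin k → ℝ) × (Fin k → ℝ) => ∑ i, (p.1 i) ^ 2) π :=
      hIX2.1
    have hIX2v : ∫ p, ∑ i, (p.1 i) ^ 2 ∂π = ((k:ℝ) - 1) * p1 ^ 2 + r1 ^ 2 :=
      hIX2.2.trans hM2v
    have hIY1i : Integrable (fun p : (Fin k → ℝ) × (Fin k → ℝ) => (∑ i, p.2 i) ^ 2) π :=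
      hIY1.1
    have hIY1v : ∫ p, (∑ i, p.2 i) ^ 2 ∂π = p2 ^ 2 * k := hIY1.2.trans hM1v'
    have hIY2i : Integrable (fun p : (Fin k → ℝ) × (Fin k → ℝ) => ∑ i, (p.2 i) ^ 2) π :=
      hIY2.1
    have hIY2v : ∫ p, ∑ i, (p.2 i) ^ 2 ∂π = (k:ℝ) * p2 ^ 2 := hIY2.2.trans hM2v'
    -- cross-term integrability
    have hcross : ∀ l m : Fin k, Integrable (fun p : (Fin k → ℝ) × (Fin k → ℝ) =>
        p.1 l * p.2 m) π := by
      intro l m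
      have hXl := (transfer_fst hfst (fun x => (x l) ^ 2)
        (by fun_prop) (by rw [← hmap1]; simpa [pow_two] using I3 p1 q1 l l)).1
      have hYm := (transfer_snd hsnd (fun x => (x m) ^ 2)
        (by fun_prop) (by rw [← hmap2]; simpa [pow_two] using I3 p2 0 m m)).1
      refine Integrable.mono ((hXl.add hYm).div_const 2)
        ((by fun_prop : Continuous fun p : (Fin k → ℝ) × (Fin k → ℝ) =>
          p.1 l * p.2 m).aestronglyMeasurable) ?_
      apply Filter.Eventually.of_forall
      intro p
      have h1 : |p.1 l * p.2 m| ≤ ((p.1 l) ^ 2 + (p.2 m) ^ 2) / 2 := by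
        apply abs_le.mpr
        constructor
        · nlinarith only [sq_nonneg (p.1 l + p.2 m)]
        · nlinarith only [sq_nonneg (p.1 l - p.2 m)]
      calc ‖p.1 l * p.2 m‖ = |p.1 l * p.2 m| := Real.norm_eq_abs _
        _ ≤ ((p.1 l) ^ 2 + (p.2 m) ^ 2) / 2 := h1
        _ ≤ |((p.1 l) ^ 2 + (p.2 m) ^ 2) / 2| := le_abs_self _
        _ = ‖((p.1 l) ^ 2 + (p.2 m) ^ 2) / 2‖ := (Real.norm_eq_abs _).symm
    have hXY : Integrable (fun p : (Fin k → ℝ) × (Fin k → ℝ) =>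
        ∑ i, p.1 i * p.2 i) π := integrable_finset_sum _ fun i _ => hcross i i
    have hSxSy : Integrable (fun p : (Fin k → ℝ) × (Fin k → ℝ) =>
        (∑ i, p.1 i) * (∑ i, p.2 i)) π := by
      have he : (fun p : (Fin k → ℝ) × (Fin k → ℝ) => (∑ i, p.1 i) * (∑ i, p.2 i))
          = fun p => ∑ l, ∑ m, p.1 l * p.2 m := by
        funext p; rw [Finset.sum_mul_sum]
      rw [he]
      exact integrable_finset_sum _ fun l _ => integrable_finset_sum _ fun m _ => hcross l m
    -- centered parts
    have hgwc : Continuous fun x : Fin k → ℝ => ∑ i, (x i - (∑ j, x j) / k) ^ 2 := by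
      fun_prop
    have hgwid : (fun x : Fin k → ℝ => ∑ i, (x i - (∑ j, x j) / k) ^ 2)
        = fun x => (∑ i, (x i) ^ 2) - (∑ j, x j) ^ 2 / (k:ℝ) := funext (hw_id hk)
    have hgw1 : Integrable (fun x : Fin k → ℝ => ∑ i, (x i - (∑ j, x j) / k) ^ 2) m1 := by
      rw [hgwid, ← hmap1]
      exact (I2 p1 q1).sub ((I1 p1 q1).div_const (k:ℝ))
    have hgw2 : Integrable (fun x : Fin k → ℝ => ∑ i, (x i - (∑ j, x j) / k) ^ 2) m2 := by
      rw [hgwid, ← hmap2]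
      exact (I2 p2 0).sub ((I1 p2 0).div_const (k:ℝ))
    have hgw1v : ∫ x, ∑ i, (x i - (∑ j, x j) / k) ^ 2 ∂m1 = ((k:ℝ) - 1) * p1 ^ 2 := by
      rw [hgwid, integral_sub (by rw [← hmap1]; exact I2 p1 q1)
        (by rw [← hmap1]; exact (I1 p1 q1).div_const (k:ℝ)), integral_div, hM2v, hM1v,
        mul_div_cancel_right₀ _ hk0.ne']
      ring
    have hgw2v : ∫ x, ∑ i, (x i - (∑ j, x j) / k) ^ 2 ∂m2 = ((k:ℝ) - 1) * p2 ^ 2 := by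
      rw [hgwid, integral_sub (by rw [← hmap2]; exact I2 p2 0)
        (by rw [← hmap2]; exact (I1 p2 0).div_const (k:ℝ)), integral_div, hM2v', hM1v',
        mul_div_cancel_right₀ _ hk0.ne']
      ring
    have hWX := transfer_fst hfst (fun x : Fin k → ℝ => ∑ i, (x i - (∑ j, x j) / (k:ℝ)) ^ 2) hgwc hgw1
    have hWY := transfer_snd hsnd (fun x : Fin k → ℝ => ∑ i, (x i - (∑ j, x j) / (k:ℝ)) ^ 2) hgwc hgw2
    have hWXi : Integrable (fun p : (Fin k → ℝ) × (Fin k → ℝ) =>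
        ∑ i, (p.1 i - (∑ j, p.1 j) / (k:ℝ)) ^ 2) π := hWX.1
    have hWXv : ∫ p, ∑ i, (p.1 i - (∑ j, p.1 j) / (k:ℝ)) ^ 2 ∂π = ((k:ℝ) - 1) * p1 ^ 2 :=
      hWX.2.trans hgw1v
    have hWYi : Integrable (fun p : (Fin k → ℝ) × (Fin k → ℝ) =>
        ∑ i, (p.2 i - (∑ j, p.2 j) / (k:ℝ)) ^ 2) π := hWY.1
    have hWYv : ∫ p, ∑ i, (p.2 i - (∑ j, p.2 j) / (k:ℝ)) ^ 2 ∂π = ((k:ℝ) - 1) * p2 ^ 2 :=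
      hWY.2.trans hgw2v
    -- F2 and its bound
    have hF2int : Integrable (fun pr : (Fin k → ℝ) × (Fin k → ℝ) =>
        ∑ i, (pr.1 i - (∑ j, pr.1 j) / k) * (pr.2 i - (∑ j, pr.2 j) / k)) π := by
      have he : (fun pr : (Fin k → ℝ) × (Fin k → ℝ) =>
          ∑ i, (pr.1 i - (∑ j, pr.1 j) / k) * (pr.2 i - (∑ j, pr.2 j) / k))
          = fun pr : (Fin k → ℝ) × (Fin k → ℝ) =>
            (∑ i, pr.1 i * pr.2 i) - (∑ i, pr.1 i) * (∑ i, pr.2 i) / (k:ℝ) := by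
        funext pr
        have := hsplit_id hk pr.1 pr.2
        linarith
      rw [he]
      exact hXY.sub (hSxSy.div_const (k:ℝ))
    have hC2 : (∫ pr, ∑ i, (pr.1 i - (∑ j, pr.1 j) / k) * (pr.2 i - (∑ j, pr.2 j) / k) ∂π)
        ≤ ((k:ℝ) - 1) * (p1 * p2) := by
      have hbb : ∀ L M : ℝ, 0 < L → 0 < M → L * M = 1 →
          (∫ pr, ∑ i, (pr.1 i - (∑ j, pr.1 j) / k) * (pr.2 i - (∑ j, pr.2 j) / k) ∂π)
            ≤ (L * (((k:ℝ) - 1) * p1 ^ 2) + M * (((k:ℝ) - 1) * p2 ^ 2)) / 2 := by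
        intro L M hL hM hLM
        have hpt2 : ∀ pr : (Fin k → ℝ) × (Fin k → ℝ),
            (∑ i, (pr.1 i - (∑ j, pr.1 j) / k) * (pr.2 i - (∑ j, pr.2 j) / k))
            ≤ (L * (∑ i, (pr.1 i - (∑ j, pr.1 j) / k) ^ 2)
              + M * (∑ i, (pr.2 i - (∑ j, pr.2 j) / k) ^ 2)) / 2 := by
          intro pr
          calc (∑ i, (pr.1 i - (∑ j, pr.1 j) / k) * (pr.2 i - (∑ j, pr.2 j) / k))
              ≤ ∑ i, (L * (pr.1 i - (∑ j, pr.1 j) / k) ^ 2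
                + M * (pr.2 i - (∑ j, pr.2 j) / k) ^ 2) / 2 :=
                Finset.sum_le_sum fun i _ => mul_le_quad hL hM hLM
            _ = _ := by
                rw [← Finset.sum_div, Finset.sum_add_distrib, ← Finset.mul_sum,
                  ← Finset.mul_sum]
        have hWXiL : Integrable (fun p : (Fin k → ℝ) × (Fin k → ℝ) =>
            L * ∑ i, (p.1 i - (∑ j, p.1 j) / (k:ℝ)) ^ 2) π := hWXi.const_mul L
        have hWYiM : Integrable (fun p : (Fin k → ℝ) × (Fin k → ℝ) =>
            M * ∑ i, (p.2 i - (∑ j, p.2 j) / (k:ℝ)) ^ 2) π := hWYi.const_mul M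
        have hgi : Integrable (fun p : (Fin k → ℝ) × (Fin k → ℝ) =>
            (L * (∑ i, (p.1 i - (∑ j, p.1 j) / (k:ℝ)) ^ 2)
              + M * (∑ i, (p.2 i - (∑ j, p.2 j) / (k:ℝ)) ^ 2)) / 2) π :=
          (hWXiL.add hWYiM).div_const 2
        have hmono := integral_mono hF2int hgi hpt2
        rw [integral_div, integral_add hWXiL hWYiM,
          integral_const_mul, integral_const_mul, hWXv, hWYv] at hmono
        exact hmono
      have := cs_aux (mul_nonneg (by linarith only [hk1]) (sq_nonneg p1))
        (mul_nonneg (by linarith only [hk1]) (sq_nonneg p2)) hbb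
      have heq : Real.sqrt (((k:ℝ) - 1) * p1 ^ 2) * Real.sqrt (((k:ℝ) - 1) * p2 ^ 2)
          = ((k:ℝ) - 1) * (p1 * p2) := by
        rw [Real.sqrt_mul (by linarith only [hk1]) (p1 ^ 2),
          Real.sqrt_mul (by linarith only [hk1]) (p2 ^ 2),
          Real.sqrt_sq hp1.le, Real.sqrt_sq hp2.le, mul_mul_mul_comm,
          Real.mul_self_sqrt (by linarith only [hk1])]
      linarith only [this, heq.le, heq.ge]
    have hC1 : (∫ pr, (∑ i, pr.1 i) * (∑ i, pr.2 i) ∂π) ≤ r1 * p2 * k := by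
      have hbb : ∀ L M : ℝ, 0 < L → 0 < M → L * M = 1 →
          (∫ pr, (∑ i, pr.1 i) * (∑ i, pr.2 i) ∂π)
            ≤ (L * (r1 ^ 2 * k) + M * (p2 ^ 2 * k)) / 2 := by
        intro L M hL hM hLM
        have hpt1 : ∀ pr : (Fin k → ℝ) × (Fin k → ℝ),
            (∑ i, pr.1 i) * (∑ i, pr.2 i)
            ≤ (L * (∑ i, pr.1 i) ^ 2 + M * (∑ i, pr.2 i) ^ 2) / 2 :=
          fun pr => mul_le_quad hL hM hLM
        have hIX1iL : Integrable (fun p : (Fin k → ℝ) × (Fin k → ℝ) =>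
            L * (∑ i, p.1 i) ^ 2) π := hIX1i.const_mul L
        have hIY1iM : Integrable (fun p : (Fin k → ℝ) × (Fin k → ℝ) =>
            M * (∑ i, p.2 i) ^ 2) π := hIY1i.const_mul M
        have hgi : Integrable (fun p : (Fin k → ℝ) × (Fin k → ℝ) =>
            (L * (∑ i, p.1 i) ^ 2 + M * (∑ i, p.2 i) ^ 2) / 2) π :=
          (hIX1iL.add hIY1iM).div_const 2
        have hmono := integral_mono hSxSy hgi hpt1
        rw [integral_div, integral_add hIX1iL hIY1iM,
          integral_const_mul, integral_const_mul, hIX1v, hIY1v] at hmono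
        exact hmono
      have := cs_aux (by positivity) (by positivity) hbb
      have heq : Real.sqrt (r1 ^ 2 * (k:ℝ)) * Real.sqrt (p2 ^ 2 * (k:ℝ))
          = r1 * p2 * k := by
        rw [Real.sqrt_mul (sq_nonneg r1) (k:ℝ), Real.sqrt_mul (sq_nonneg p2) (k:ℝ),
          Real.sqrt_sq hr1.le, Real.sqrt_sq hp2.le, mul_mul_mul_comm,
          Real.mul_self_sqrt hk0.le]
      linarith only [this, heq.le]
    -- split the cross term
    have hCsplit : (∫ p, ∑ i, p.1 i * p.2 i ∂π)
        = (∫ pr, (∑ i, pr.1 i) * (∑ i, pr.2 i) ∂π) / k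
          + ∫ pr, ∑ i, (pr.1 i - (∑ j, pr.1 j) / k) * (pr.2 i - (∑ j, pr.2 j) / k) ∂π := by
      rw [← integral_div, ← integral_add (hSxSy.div_const (k:ℝ)) hF2int]
      exact integral_congr_ae (Filter.Eventually.of_forall fun pr =>
        hsplit_id hk pr.1 pr.2)
    have hCb : (∫ p, ∑ i, p.1 i * p.2 i ∂π) ≤ r1 * p2 + ((k:ℝ) - 1) * (p1 * p2) := by
      have h1 : (∫ pr, (∑ i, pr.1 i) * (∑ i, pr.2 i) ∂π) / k ≤ r1 * p2 := by
        rw [div_le_iff₀ hk0]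
        exact hC1
      linarith only [hCsplit, hC2, h1]
    -- expand the cost
    have hpt : ∀ pr : (Fin k → ℝ) × (Fin k → ℝ),
        (∑ i, (pr.1 i - pr.2 i) ^ 2)
          = (∑ i, (pr.1 i) ^ 2) + (∑ i, (pr.2 i) ^ 2) - 2 * (∑ i, pr.1 i * pr.2 i) := by
      intro pr
      rw [Finset.mul_sum, ← Finset.sum_add_distrib, ← Finset.sum_sub_distrib]
      exact Finset.sum_congr rfl fun i _ => by ring
    have hrval : r = (((k:ℝ) - 1) * p1 ^ 2 + r1 ^ 2) + (k:ℝ) * p2 ^ 2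
        - 2 * (∫ p, ∑ i, p.1 i * p.2 i ∂π) := by
      have hsumi : Integrable (fun p : (Fin k → ℝ) × (Fin k → ℝ) =>
          (∑ i, (p.1 i) ^ 2) + (∑ i, (p.2 i) ^ 2)) π := hIX2i.add hIY2i
      have hXY2 : Integrable (fun p : (Fin k → ℝ) × (Fin k → ℝ) =>
          2 * ∑ i, p.1 i * p.2 i) π := hXY.const_mul 2
      rw [hr, integral_congr_ae (Filter.Eventually.of_forall hpt),
        integral_sub hsumi hXY2,
        integral_add hIX2i hIY2i, integral_const_mul, hIX2v, hIY2v]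
    have hiden : (((k:ℝ) - 1) * p1 ^ 2 + r1 ^ 2) + (k:ℝ) * p2 ^ 2
        - 2 * (r1 * p2 + ((k:ℝ) - 1) * (p1 * p2)) = V := by
      rw [hV_def]; ring
    linarith only [hrval, hCb, hiden]
  -- conclude
  rw [show W2sq m1 m2 = sInf { r : ℝ | ∃ π : Measure ((Fin k → ℝ) × (Fin k → ℝ)),
      IsProbabilityMeasure π ∧ π.map Prod.fst = m1 ∧ π.map Prod.snd = m2 ∧
      r = ∫ p, ∑ i, (p.1 i - p.2 i) ^ 2 ∂π } from rfl]
  exact le_antisymm (csInf_le ⟨V, fun r hr => hlow r hr⟩ hmem) (le_csInf ⟨V, hmem⟩ hlow)
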